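/- Let K be the tridiagonal period matrix as above and β = -(1/2)𝕀 where 𝕀 = (1,...,1). Then the point Z = βK lies on the boundary of the fundamental region D_0: the inequality -lZᵀ ≤ (1/2)lKlᵀ holds for all l ∈ ℤ^g, with equality for l = 𝕀. -/

import Mathlib

open Finset

/-- The tridiagonal period matrix of the tropical spectral curve, in 0-based
indexing: row `a` corresponds to the 1-based index `a+1`. -/
noncomputable def periodK (g : ℕ) (lam p : ℕ → ℝ) : Matrix (Fin g) (Fin g) ℝ :=
  fun a b =>
    if a = b then p a.val + p (a.val + 1) + 2 * (lam (a.val + 1) - lam a.val)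
    else if a.val + 1 = b.val then -p (a.val + 1)
    else if b.val + 1 = a.val then -p (b.val + 1)
    else 0

/-- ℕ-indexed version of the tridiagonal period matrix. -/
noncomputable def Knat (lam p : ℕ → ℝ) (a b : ℕ) : ℝ :=
  if a = b then p a + p (a + 1) + 2 * (lam (a + 1) - lam a)
  else if a + 1 = b then -p (a + 1)
  else if b + 1 = a then -p (b + 1)
  else 0

lemma sq_sub_self_nonneg (n : ℤ) : 0 ≤ (n : ℝ)^2 - (n : ℝ) := by
  have h : (0:ℤ) ≤ n * (n - 1) := by
    rcases le_or_gt n 0 with h | h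
    · have := mul_nonneg (a := -n) (b := 1 - n) (by omega) (by omega); nlinarith
    · exact mul_nonneg (by omega) (by omega)
  have h' : (0:ℝ) ≤ (n:ℝ) * ((n:ℝ) - 1) := by exact_mod_cast h
  nlinarith

/-- The key algebraic identity: the quadratic form minus its value against the
all-ones vector decomposes as a positive combination. -/
lemma key_ident (p lam : ℕ → ℝ) (y : ℕ → ℝ) : ∀ g : ℕ,
    (∑ a ∈ range (g+1), (p a + p (a+1) + 2*(lam (a+1) - lam a)) * y a ^ 2)
      - 2 * ∑ a ∈ range g, p (a+1) * y a * y (a+1)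
      - (2 * ∑ a ∈ range (g+1), (lam (a+1) - lam a) * y a + p 0 * y 0 + p (g+1) * y g)
    = p 0 * (y 0 ^ 2 - y 0) + p (g+1) * (y g ^ 2 - y g)
      + ∑ a ∈ range g, p (a+1) * (y a - y (a+1)) ^ 2
      + 2 * ∑ a ∈ range (g+1), (lam (a+1) - lam a) * (y a ^ 2 - y a) := by
  intro g
  induction g with
  | zero => simp; ring
  | succ n ih =>
    simp only [Finset.sum_range_succ] at ih ⊢
    linear_combination ih

lemma Knat_split (lam p : ℕ → ℝ) (a b : ℕ) :
    Knat lam p a b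
      = (if a = b then p b + p (b + 1) + 2 * (lam (b + 1) - lam b) else 0)
        + (if a + 1 = b then -p b else 0) + (if a = b + 1 then -p (b + 1) else 0) := by
  unfold Knat
  split_ifs <;> try omega
  all_goals subst_vars
  all_goals ring

lemma col_sum (lam p : ℕ → ℝ) (n b : ℕ) (hb : b < n + 1) :
    ∑ a ∈ range (n + 1), Knat lam p a b
      = 2 * (lam (b + 1) - lam b) + (if b = 0 then p 0 else 0)
        + (if b = n then p (n + 1) else 0) := by
  simp only [Knat_split]
  rw [Finset.sum_add_distrib, Finset.sum_add_distrib]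
  have h1 : ∑ a ∈ range (n + 1),
      (if a = b then p b + p (b + 1) + 2 * (lam (b + 1) - lam b) else 0)
      = p b + p (b + 1) + 2 * (lam (b + 1) - lam b) := by
    rw [Finset.sum_ite_eq' (range (n + 1)) b]
    simp [Finset.mem_range, hb]
  have h2 : ∑ a ∈ range (n + 1), (if a + 1 = b then -p b else 0)
      = if b = 0 then 0 else -p b := by
    rcases b with _ | c
    · simp
    · simp only [Nat.add_right_cancel_iff, Nat.succ_ne_zero, if_false]
      rw [Finset.sum_ite_eq' (range (n + 1)) c]
      simp [Finset.mem_range]; omega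
  have h3 : ∑ a ∈ range (n + 1), (if a = b + 1 then -p (b + 1) else 0)
      = if b = n then 0 else -p (b + 1) := by
    rw [Finset.sum_ite_eq' (range (n + 1)) (b + 1)]
    simp only [Finset.mem_range]
    by_cases h : b = n
    · simp [h]
    · have : b + 1 < n + 1 := by omega
      simp [this, h]
  rw [h1, h2, h3]
  split_ifs <;> subst_vars <;> ring

lemma row_sum (lam p : ℕ → ℝ) (n : ℕ) (y : ℕ → ℝ) (a : ℕ) (ha : a < n + 1) :
    ∑ b ∈ range (n + 1), y a * Knat lam p a b * y b
      = (p a + p (a + 1) + 2 * (lam (a + 1) - lam a)) * y a ^ 2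
        - (if a = 0 then 0 else p a * y (a - 1) * y a)
        - (if a < n then p (a + 1) * y a * y (a + 1) else 0) := by
  have hsplit : ∀ b, y a * Knat lam p a b * y b
      = (if b = a then (p a + p (a + 1) + 2 * (lam (a + 1) - lam a)) * y a * y b else 0)
        + (if b = a + 1 then -p (a + 1) * y a * y b else 0)
        + (if b + 1 = a then -p a * y a * y b else 0) := by
    intro b
    unfold Knat
    split_ifs <;> try omega
    all_goals subst_vars
    all_goals ring
  simp only [hsplit]
  rw [Finset.sum_add_distrib, Finset.sum_add_distrib]
  have h1 : ∑ b ∈ range (n + 1),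
      (if b = a then (p a + p (a + 1) + 2 * (lam (a + 1) - lam a)) * y a * y b else 0)
      = (p a + p (a + 1) + 2 * (lam (a + 1) - lam a)) * y a * y a := by
    rw [Finset.sum_ite_eq' (range (n + 1)) a]
    simp [Finset.mem_range, ha]
  have h2 : ∑ b ∈ range (n + 1), (if b = a + 1 then -p (a + 1) * y a * y b else 0)
      = if a < n then -p (a + 1) * y a * y (a + 1) else 0 := by
    rw [Finset.sum_ite_eq' (range (n + 1)) (a + 1)]
    simp only [Finset.mem_range]
    by_cases h : a < n
    · simp [h, Nat.add_lt_add_right h 1]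
    · have : ¬ a + 1 < n + 1 := by omega
      simp [h, this]
  have h3 : ∑ b ∈ range (n + 1), (if b + 1 = a then -p a * y a * y b else 0)
      = if a = 0 then 0 else -p a * y a * y (a - 1) := by
    rcases a with _ | c
    · simp
    · simp only [Nat.add_right_cancel_iff, Nat.succ_ne_zero, if_false, Nat.add_sub_cancel]
      rw [Finset.sum_ite_eq' (range (n + 1)) c]
      have : c ∈ range (n + 1) := by simp only [Finset.mem_range]; omega
      simp [this]
  rw [h1, h2, h3]
  split_ifs <;> ring

lemma Bsum (lam p : ℕ → ℝ) (n : ℕ) (y : ℕ → ℝ) :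
    ∑ a ∈ range (n + 1), ∑ b ∈ range (n + 1), y a * Knat lam p a b * y b
      = ∑ a ∈ range (n + 1), (p a + p (a + 1) + 2 * (lam (a + 1) - lam a)) * y a ^ 2
        - 2 * ∑ a ∈ range n, p (a + 1) * y a * y (a + 1) := by
  have hrows : ∀ a ∈ range (n + 1),
      ∑ b ∈ range (n + 1), y a * Knat lam p a b * y b
        = (p a + p (a + 1) + 2 * (lam (a + 1) - lam a)) * y a ^ 2
          - (if a = 0 then 0 else p a * y (a - 1) * y a)
          - (if a < n then p (a + 1) * y a * y (a + 1) else 0) := fun a ha =>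
    row_sum lam p n y a (Finset.mem_range.mp ha)
  rw [Finset.sum_congr rfl hrows]
  have e1 : ∑ a ∈ range (n + 1), (if a = 0 then (0:ℝ) else p a * y (a - 1) * y a)
      = ∑ a ∈ range n, p (a + 1) * y a * y (a + 1) := by
    rw [Finset.sum_range_succ']
    simp
  have e2 : ∑ a ∈ range (n + 1), (if a < n then p (a + 1) * y a * y (a + 1) else (0:ℝ))
      = ∑ a ∈ range n, p (a + 1) * y a * y (a + 1) := by
    rw [Finset.sum_range_succ]
    simp only [lt_irrefl, if_false, add_zero]
    exact Finset.sum_congr rfl fun a ha => if_pos (Finset.mem_range.mp ha)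
  simp only [Finset.sum_sub_distrib]
  rw [e1, e2]
  ring

/-- Lemma 2.10(i): `Z = βK` with `β = -(1/2)𝕀` lies on the boundary of the
fundamental region `D₀`. -/
theorem betaK_on_boundary (g : ℕ) (hg : 0 < g) (L : ℝ) (lam p : ℕ → ℝ)
    (hlam : ∀ i, i < g → lam i < lam (i + 1))
    (hL : 2 * ∑ i ∈ Finset.Icc 1 g, (lam i - lam 0) < L)
    (hp0 : p 0 = L)
    (hp : ∀ i, 1 ≤ i → i ≤ g →
      p i = L - 2 * ∑ j ∈ Finset.Icc 1 g, min (lam i - lam 0) (lam j - lam 0))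
    (Z : Fin g → ℝ) (hZ : ∀ j : Fin g, Z j = -(1/2) * ∑ i, periodK g lam p i j) :
    (∀ l : Fin g → ℤ, -(∑ i, (l i : ℝ) * Z i) ≤
        (1/2) * ∑ i, ∑ j, (l i : ℝ) * periodK g lam p i j * (l j : ℝ)) ∧
      -(∑ i, Z i) = (1/2) * ∑ i, ∑ j, periodK g lam p i j := by
  obtain ⟨n, rfl⟩ : ∃ n, g = n + 1 := ⟨g - 1, by omega⟩
  have hK : ∀ i j : Fin (n + 1), periodK (n + 1) lam p i j = Knat lam p i.val j.val := by
    intro i j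
    simp only [periodK, Knat, Fin.ext_iff]
  constructor
  · -- the inequality
    intro l
    set y : ℕ → ℝ := fun a => if h : a < n + 1 then ((l ⟨a, h⟩ : ℤ) : ℝ) else 0 with hy
    -- positivity facts
    have hmono : ∀ i, i ≤ n + 1 → lam 0 ≤ lam i := by
      intro i hi
      induction i with
      | zero => exact le_refl _
      | succ k ih =>
        exact le_trans (ih (by omega)) (le_of_lt (hlam k (by omega)))
    have hsum_nonneg : (0:ℝ) ≤ ∑ i ∈ Finset.Icc 1 (n + 1), (lam i - lam 0) := by
      apply Finset.sum_nonneg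
      intro i hi
      have := hmono i (Finset.mem_Icc.mp hi).2
      linarith
    have hLpos : 0 < L := lt_of_le_of_lt (by linarith) hL
    have hppos : ∀ a, a ≤ n + 1 → 0 ≤ p a := by
      intro a ha
      rcases Nat.eq_zero_or_pos a with rfl | hpos
      · rw [hp0]; linarith
      · rw [hp a hpos ha]
        have hmin : ∑ j ∈ Finset.Icc 1 (n + 1), min (lam a - lam 0) (lam j - lam 0)
            ≤ ∑ j ∈ Finset.Icc 1 (n + 1), (lam j - lam 0) :=
          Finset.sum_le_sum fun j _ => min_le_right _ _
        linarith
    have hΔ : ∀ a, a < n + 1 → 0 ≤ lam (a + 1) - lam a := by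
      intro a ha; have := hlam a ha; linarith
    have hysq : ∀ a, 0 ≤ y a ^ 2 - y a := by
      intro a
      by_cases h : a < n + 1
      · simp only [hy, dif_pos h]
        exact sq_sub_self_nonneg _
      · simp only [hy, dif_neg h]; norm_num
    -- rewrite the left-hand side
    have hC : -(∑ i, (l i : ℝ) * Z i)
        = (1/2) * (2 * ∑ a ∈ range (n + 1), (lam (a + 1) - lam a) * y a
            + p 0 * y 0 + p (n + 1) * y n) := by
      have hterm : ∀ j : Fin (n + 1), (l j : ℝ) * Z j
          = -(1/2) * ((l j : ℝ) * ∑ i, periodK (n + 1) lam p i j) := by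
        intro j; rw [hZ]; ring
      rw [Finset.sum_congr rfl fun j _ => hterm j, ← Finset.mul_sum]
      have houter : ∑ j : Fin (n + 1), (l j : ℝ) * ∑ i, periodK (n + 1) lam p i j
          = ∑ b ∈ range (n + 1), y b * (2 * (lam (b + 1) - lam b)
              + (if b = 0 then p 0 else 0) + (if b = n then p (n + 1) else 0)) := by
        rw [← Fin.sum_univ_eq_sum_range (fun b => y b * (2 * (lam (b + 1) - lam b)
              + (if b = 0 then p 0 else 0) + (if b = n then p (n + 1) else 0))) (n + 1)]
        apply Finset.sum_congr rfl
        intro j _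
        have hyj : y (j : ℕ) = (l j : ℝ) := by
          simp only [hy, dif_pos j.isLt, Fin.eta]
        have hinner : ∑ i, periodK (n + 1) lam p i j
            = ∑ a ∈ range (n + 1), Knat lam p a j.val := by
          rw [← Fin.sum_univ_eq_sum_range (fun a => Knat lam p a j.val) (n + 1)]
          exact Finset.sum_congr rfl fun i _ => hK i j
        rw [hinner, col_sum lam p n j.val j.isLt, hyj]
      rw [houter]
      have hexpand : ∀ b ∈ range (n + 1),
          y b * (2 * (lam (b + 1) - lam b) + (if b = 0 then p 0 else 0)
            + (if b = n then p (n + 1) else 0))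
          = 2 * ((lam (b + 1) - lam b) * y b) + (if b = 0 then p 0 * y b else 0)
            + (if b = n then p (n + 1) * y b else 0) := by
        intro b _; split_ifs <;> ring
      rw [Finset.sum_congr rfl hexpand, Finset.sum_add_distrib, Finset.sum_add_distrib]
      rw [Finset.sum_ite_eq' (range (n + 1)) 0 (fun b => p 0 * y b),
        Finset.sum_ite_eq' (range (n + 1)) n (fun b => p (n + 1) * y b),
        ← Finset.mul_sum]
      simp only [Finset.mem_range, Nat.succ_pos, Nat.lt_succ_self, if_pos, if_true]
      ring
    -- rewrite the right-hand side
    have hB : ∑ i, ∑ j, (l i : ℝ) * periodK (n + 1) lam p i j * (l j : ℝ)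
        = ∑ a ∈ range (n + 1), (p a + p (a + 1) + 2 * (lam (a + 1) - lam a)) * y a ^ 2
          - 2 * ∑ a ∈ range n, p (a + 1) * y a * y (a + 1) := by
      rw [← Bsum lam p n y]
      rw [← Fin.sum_univ_eq_sum_range
        (fun a => ∑ b ∈ range (n + 1), y a * Knat lam p a b * y b) (n + 1)]
      apply Finset.sum_congr rfl
      intro i _
      rw [← Fin.sum_univ_eq_sum_range (fun b => y i.val * Knat lam p i.val b * y b) (n + 1)]
      apply Finset.sum_congr rfl
      intro j _
      have hyi : y (i : ℕ) = (l i : ℝ) := by simp only [hy, dif_pos i.isLt, Fin.eta]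
      have hyj : y (j : ℕ) = (l j : ℝ) := by simp only [hy, dif_pos j.isLt, Fin.eta]
      rw [hK i j, hyi, hyj]
    rw [hC, hB]
    have hkey := key_ident p lam y n
    have ht1 : 0 ≤ p 0 * (y 0 ^ 2 - y 0) := mul_nonneg (hppos 0 (by omega)) (hysq 0)
    have ht2 : 0 ≤ p (n + 1) * (y n ^ 2 - y n) :=
      mul_nonneg (hppos (n + 1) (le_refl _)) (hysq n)
    have ht3 : 0 ≤ ∑ a ∈ range n, p (a + 1) * (y a - y (a + 1)) ^ 2 := by
      apply Finset.sum_nonneg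
      intro a ha
      exact mul_nonneg (hppos (a + 1) (by have := Finset.mem_range.mp ha; omega))
        (sq_nonneg _)
    have ht4 : 0 ≤ 2 * ∑ a ∈ range (n + 1), (lam (a + 1) - lam a) * (y a ^ 2 - y a) := by
      apply mul_nonneg (by norm_num)
      apply Finset.sum_nonneg
      intro a ha
      exact mul_nonneg (hΔ a (Finset.mem_range.mp ha)) (hysq a)
    linarith
  · -- the equality
    simp only [hZ]
    rw [← Finset.mul_sum]
    rw [Finset.sum_comm]
    ring
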